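/- Let J be a real symmetric N×N matrix with vanishing diagonal and let λ ∈ ℝ^N satisfy Σ_μ λ_μ = 0. Then for every G in the Gram set 𝒢_N, Tr(J·G) ≥ N · j_min(λ), where j_min(λ) is the smallest eigenvalue of J(λ) = J + diag(λ). In particular the minimal Heisenberg energy E_min satisfies E_min ≥ N·j_min(λ) for every such λ. -/

import Mathlib

open Matrix

/-- The Gram set: real symmetric positive semidefinite `N × N` matrices with unit diagonal. -/
def GramSet (N : ℕ) : Set (Matrix (Fin N) (Fin N) ℝ) :=
  {G | G.PosSemidef ∧ ∀ i, G i i = 1}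

/-- The smallest eigenvalue of a real square matrix (the infimum of its set of eigenvalues). -/
noncomputable def minEigenvalue {N : ℕ} (A : Matrix (Fin N) (Fin N) ℝ) : ℝ :=
  sInf {r : ℝ | ∃ x : Fin N → ℝ, x ≠ 0 ∧ A.mulVec x = r • x}

section Aux
variable {n : ℕ}

lemma psd_trace_nonneg {M : Matrix (Fin n) (Fin n) ℝ} (h : M.PosSemidef) : 0 ≤ M.trace := by
  rw [Matrix.trace]
  apply Finset.sum_nonneg
  intro i _
  have := h.diag_nonneg (i := i)
  simpa [dotProduct, Matrix.mulVec, Pi.single_apply, Finset.sum_ite_eq,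
    Finset.sum_ite_eq'] using this

lemma trace_mul_psd_nonneg {A G : Matrix (Fin n) (Fin n) ℝ} (hA : A.PosSemidef)
    (hG : G.PosSemidef) : 0 ≤ (A * G).trace := by
  obtain ⟨C, rfl⟩ : ∃ C : Matrix (Fin n) (Fin n) ℝ, G = Cᴴ * C := by
    open scoped MatrixOrder in exact CStarAlgebra.nonneg_iff_eq_star_mul_self.mp hG.nonneg
  have h1 : (A * (Cᴴ * C)).trace = (C * A * Cᴴ).trace := by
    rw [← Matrix.trace_mul_cycle, mul_assoc]
  rw [h1]
  exact psd_trace_nonneg (hA.mul_mul_conjTranspose_same C)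

lemma det_sub_smul_one (A : Matrix (Fin n) (Fin n) ℝ) (hA : A.IsHermitian) (r : ℝ) :
    (A - r • 1).det = ∏ i, (hA.eigenvalues i - r) := by
  set U : Matrix (Fin n) (Fin n) ℝ := (hA.eigenvectorUnitary : Matrix (Fin n) (Fin n) ℝ) with hU
  have hUU : U * star U = 1 := Matrix.mem_unitaryGroup_iff.mp hA.eigenvectorUnitary.2
  have hD : A - r • 1 = U * (Matrix.diagonal (fun i => hA.eigenvalues i - r)) * star U := by
    conv_lhs => rw [hA.spectral_theorem, Unitary.conjStarAlgAut_apply]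
    have h1 : (r • (1 : Matrix (Fin n) (Fin n) ℝ)) = U * (r • 1) * star U := by
      rw [mul_smul_comm, mul_one, smul_mul_assoc, hUU]
    rw [h1, ← Matrix.sub_mul, ← Matrix.mul_sub]
    congr 2
    ext i j
    by_cases hij : i = j <;>
      simp [Matrix.diagonal, Matrix.one_apply, hij, Matrix.smul_apply, Matrix.sub_apply]
  have hdet1 : U.det * (star U).det = 1 := by rw [← Matrix.det_mul, hUU, Matrix.det_one]
  rw [hD, Matrix.det_mul, Matrix.det_mul, Matrix.det_diagonal]
  calc U.det * (∏ i, (hA.eigenvalues i - r)) * (star U).det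
      = (U.det * (star U).det) * ∏ i, (hA.eigenvalues i - r) := by ring
    _ = ∏ i, (hA.eigenvalues i - r) := by rw [hdet1, one_mul]

lemma eig_set_eq_range (A : Matrix (Fin n) (Fin n) ℝ) (hA : A.IsHermitian) :
    {r : ℝ | ∃ x : Fin n → ℝ, x ≠ 0 ∧ A.mulVec x = r • x} = Set.range hA.eigenvalues := by
  ext r
  constructor
  · rintro ⟨x, hx, hAx⟩
    have h0 : (A - r • 1).mulVec x = 0 := by
      rw [Matrix.sub_mulVec, Matrix.smul_mulVec, Matrix.one_mulVec, hAx, sub_self]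
    have hdet : (A - r • 1).det = 0 :=
      Matrix.exists_mulVec_eq_zero_iff.mp ⟨x, hx, h0⟩
    rw [det_sub_smul_one A hA r] at hdet
    obtain ⟨i, _, hi⟩ := Finset.prod_eq_zero_iff.mp hdet
    exact ⟨i, by linarith [sub_eq_zero.mp hi]⟩
  · rintro ⟨i, rfl⟩
    refine ⟨⇑(hA.eigenvectorBasis i), ?_, hA.mulVec_eigenvectorBasis i⟩
    intro h
    apply hA.eigenvectorBasis.orthonormal.ne_zero i
    ext j
    exact congrFun h j

end Aux

/-- For `J` symmetric with vanishing diagonal and `λ` with zero sum,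
`Tr (J G) ≥ N ⬝ j_min(λ)` for every `G` in the Gram set. -/
theorem trace_ge_card_mul_minEigenvalue {N : ℕ} (hN : 0 < N)
    (J : Matrix (Fin N) (Fin N) ℝ) (hsym : J.IsSymm) (hdiag : ∀ i, J i i = 0)
    (lam : Fin N → ℝ) (hlam : ∑ i, lam i = 0)
    (G : Matrix (Fin N) (Fin N) ℝ) (hG : G ∈ GramSet N) :
    (J * G).trace ≥ (N : ℝ) * minEigenvalue (J + Matrix.diagonal lam) := by
  obtain ⟨hGps, hGd⟩ := hG
  set A : Matrix (Fin N) (Fin N) ℝ := J + Matrix.diagonal lam with hAdef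
  have hA : A.IsHermitian := by
    rw [Matrix.IsHermitian, Matrix.conjTranspose_eq_transpose_of_trivial]
    exact hsym.add (Matrix.isSymm_diagonal lam)
  set m : ℝ := minEigenvalue A with hm
  have hSrange : {r : ℝ | ∃ x : Fin N → ℝ, x ≠ 0 ∧ A.mulVec x = r • x}
      = Set.range hA.eigenvalues := eig_set_eq_range A hA
  have hbdd : BddBelow (Set.range hA.eigenvalues) := (Set.finite_range _).bddBelow
  have hle : ∀ r ∈ Set.range hA.eigenvalues, m ≤ r := by
    intro r hr
    rw [hm, minEigenvalue, hSrange]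
    exact csInf_le hbdd hr
  -- B = A - m • 1 is PSD
  set B : Matrix (Fin N) (Fin N) ℝ := A - m • 1 with hBdef
  have hB : B.IsHermitian := by
    rw [Matrix.IsHermitian, Matrix.conjTranspose_eq_transpose_of_trivial]
    rw [Matrix.IsHermitian, Matrix.conjTranspose_eq_transpose_of_trivial] at hA
    rw [Matrix.transpose_sub, hA, Matrix.transpose_smul, Matrix.transpose_one]
  have hBpsd : B.PosSemidef := by
    apply hB.posSemidef_iff_eigenvalues_nonneg.mpr
    intro j
    show 0 ≤ hB.eigenvalues j
    set v := ⇑(hB.eigenvectorBasis j)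
    have hv0 : v ≠ 0 := by
      intro h
      apply hB.eigenvectorBasis.orthonormal.ne_zero j
      ext k; exact congrFun h k
    have hveq : A.mulVec v = (hB.eigenvalues j + m) • v := by
      have h1 : B.mulVec v = hB.eigenvalues j • v := hB.mulVec_eigenvectorBasis j
      have h2 : A.mulVec v = B.mulVec v + m • v := by
        rw [hBdef, Matrix.sub_mulVec, Matrix.smul_mulVec, Matrix.one_mulVec]
        ring_nf
      rw [h2, h1, add_smul]
    have hmem : hB.eigenvalues j + m ∈ Set.range hA.eigenvalues := by
      rw [← hSrange]; exact ⟨v, hv0, hveq⟩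
    have := hle _ hmem
    linarith
  -- trace computations
  have htrG : G.trace = (N : ℝ) := by
    rw [Matrix.trace]
    simp [Matrix.diag, hGd]
  have hdiagtr : (Matrix.diagonal lam * G).trace = 0 := by
    rw [Matrix.trace]
    have : ∀ i, (Matrix.diagonal lam * G).diag i = lam i * G i i := by
      intro i; simp [Matrix.diag, Matrix.diagonal_mul]
    rw [Finset.sum_congr rfl fun i _ => this i]
    simp only [hGd, mul_one]
    exact hlam
  have hAG : (A * G).trace = (J * G).trace := by
    rw [hAdef, Matrix.add_mul, Matrix.trace_add, hdiagtr, add_zero]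
  have hBG : (A * G).trace = (B * G).trace + m * (N : ℝ) := by
    have : A * G = B * G + m • G := by
      rw [hBdef, Matrix.sub_mul, Matrix.smul_mul, Matrix.one_mul]
      abel
    rw [this, Matrix.trace_add, Matrix.trace_smul, smul_eq_mul, htrG]
  have h0 : 0 ≤ (B * G).trace := trace_mul_psd_nonneg hBpsd hGps
  have : (J * G).trace = (B * G).trace + m * (N : ℝ) := by rw [← hAG, hBG]
  rw [this]
  nlinarith [h0]
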